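/- For all k, r ∈ ℕ and every nonempty finite set V, every C_k-stable partition γ ∈ P(V^k) is C_{k,r}-stable. -/

import Mathlib

open Classical Matrix

noncomputable section

/-- `k`-tuples of elements of `V`. -/
abbrev Tup (V : Type) (k : ℕ) := Fin k → V

variable {V : Type}

/-- `v⟨i,x⟩` : the tuple obtained from `v` by substituting, for each `s`,
the entry of `v` in position `i s` by `x s`. -/
def substTup {k r : ℕ} (v : Tup V k) (i : Fin r → Fin k) (x : Tup V r) : Tup V k :=
  fun j => if h : ∃ s, i s = j then x h.choose else v j

/-- `pr_j v = (v_{j 1}, …, v_{j r})`. -/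
def prTup {k r : ℕ} (j : Fin r → Fin k) (v : Tup V k) : Tup V r := fun s => v (j s)

/-- `(w_1, …, w_r, w_r, …, w_r) : V^k`. -/
def extendTup [Nonempty V] {r : ℕ} (k : ℕ) (w : Tup V r) : Tup V k := fun i =>
  if h : (i : ℕ) < r then w ⟨i, h⟩
  else if h' : 0 < r then w ⟨r - 1, by omega⟩
  else Classical.arbitrary V

/-- The `r`-projection `pr_r γ` of a labelled partition (presented as a setoid) of `V^k`. -/
def prPart [Nonempty V] {k : ℕ} (r : ℕ) (γ : Setoid (Tup V k)) : Setoid (Tup V r) where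
  r w w' := γ.r (extendTup k w) (extendTup k w')
  iseqv := ⟨fun _ => γ.iseqv.refl _, fun h => γ.iseqv.symm h, fun h h' => γ.iseqv.trans h h'⟩

/-- `v^τ`, the tuple with `i`-th entry `v (τ⁻¹ i)`. -/
def permTup {k : ℕ} (τ : Equiv.Perm (Fin k)) (v : Tup V k) : Tup V k := fun i => v (τ.symm i)

/-- `γ ⪯ ρ` : the partition `ρ` refines the partition `γ`. -/
def Refines {A : Type*} (γ ρ : Setoid A) : Prop := ∀ u v : A, ρ.r u v → γ.r u v

/-- `γ ≈ ρ` : the partitions mutually refine each other. -/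
def PartEquiv {A : Type*} (γ ρ : Setoid A) : Prop := Refines γ ρ ∧ Refines ρ γ

/-- Invariance of a partition of `V^k` under `Sym(k)`. -/
def Invariant {k : ℕ} (γ : Setoid (Tup V k)) : Prop :=
  ∀ u v : Tup V k, γ.r u v → ∀ τ : Equiv.Perm (Fin k), γ.r (permTup τ u) (permTup τ v)

/-- `r`-consistency of a partition of `V^k`. -/
def Consistent [Nonempty V] {k : ℕ} (r : ℕ) (γ : Setoid (Tup V k)) : Prop :=
  ∀ u v : Tup V k, γ.r u v → ∀ j : Fin r → Fin k,
    (prPart r γ).r (prTup j u) (prTup j v)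

/-- Graph-like partitions of `V^k`. -/
def GraphLike [Nonempty V] {k : ℕ} (γ : Setoid (Tup V k)) : Prop :=
  Invariant γ ∧ (∀ r ≤ k, Consistent r γ) ∧
    ∀ u v : Tup V k, γ.r u v → ∀ i j : Fin k, u i = u j → v i = v j

/-- `{x ∈ V^r : γ(u⟨i,x⟩) = φ_i for all i ∈ [k]^(r)}`, where the colour tuple `φ` is
given by representatives. -/
def WLSet {k r : ℕ} (γ : Setoid (Tup V k)) (u : Tup V k)
    (φ : (Fin r → Fin k) → Tup V k) : Set (Tup V r) :=
  {x | ∀ i : Fin r → Fin k, Function.Injective i → γ.r (substTup u i x) (φ i)}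

/-- `{x ∈ V^r : γ(u⟨i,x⟩) = σ}`, where the colour `σ` is given by a representative `w`. -/
def CSet {k r : ℕ} (γ : Setoid (Tup V k)) (u : Tup V k)
    (i : Fin r → Fin k) (w : Tup V k) : Set (Tup V r) :=
  {x | γ.r (substTup u i x) w}

/-- `WL_{k,r}`-stability of a partition of `V^k`. -/
def WLStable {k : ℕ} (r : ℕ) (γ : Setoid (Tup V k)) : Prop :=
  r < k → ∀ u v : Tup V k, γ.r u v →
    ∀ φ : (Fin r → Fin k) → Tup V k, (WLSet γ u φ).ncard = (WLSet γ v φ).ncard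

/-- `C_{k,r}`-stability of a partition of `V^k`. -/
def CStable {k : ℕ} (r : ℕ) (γ : Setoid (Tup V k)) : Prop :=
  r < k → ∀ u v : Tup V k, γ.r u v →
    ∀ i : Fin r → Fin k, Function.Injective i → ∀ w : Tup V k,
      (CSet γ u i w).ncard = (CSet γ v i w).ncard

/-- The matrix `χ^{γ,v}_{i,σ}`, with the colour `σ` given by a representative `w`. -/
def chiMat (F : Type) [Field F] {k : ℕ} (γ : Setoid (Tup V k)) (v : Tup V k)
    (i : Fin 2 → Fin k) (w : Tup V k) : Matrix V V F :=
  Matrix.of fun x y => if γ.r (substTup v i ![x, y]) w then (1 : F) else 0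

/-- The matrix `χ^{γ,v}_φ`, with the colour tuple `φ` given by representatives. -/
def chiMatT (F : Type) [Field F] {k : ℕ} (γ : Setoid (Tup V k)) (v : Tup V k)
    (φ : (Fin 2 → Fin k) → Tup V k) : Matrix V V F :=
  Matrix.of fun x y =>
    if ∀ i : Fin 2 → Fin k, Function.Injective i → γ.r (substTup v i ![x, y]) (φ i)
    then (1 : F) else 0

/-- `IM_k^F`-stability of a partition of `V^k`. -/
def IMStable (F : Type) [Field F] [Fintype V] [DecidableEq V] {k : ℕ}
    (γ : Setoid (Tup V k)) : Prop :=
  2 < k → ∀ u v : Tup V k, γ.r u v →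
    ∀ i : Fin 2 → Fin k, Function.Injective i →
      ∃ S : (Matrix V V F)ˣ, ∀ w : Tup V k,
        (S : Matrix V V F) * chiMat F γ u i w * ((S⁻¹ : (Matrix V V F)ˣ) : Matrix V V F)
          = chiMat F γ v i w

/-- `IMt_k^F`-stability of a partition of `V^k`. -/
def IMtStable (F : Type) [Field F] [Fintype V] [DecidableEq V] {k : ℕ}
    (γ : Setoid (Tup V k)) : Prop :=
  2 < k → ∀ u v : Tup V k, γ.r u v →
    ∃ S : (Matrix V V F)ˣ, ∀ φ : (Fin 2 → Fin k) → Tup V k,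
      (S : Matrix V V F) * chiMatT F γ u φ * ((S⁻¹ : (Matrix V V F)ˣ) : Matrix V V F)
        = chiMatT F γ v φ

/-- The refinement operator `WL_{k,r}`. -/
def WLop {k : ℕ} (r : ℕ) (γ : Setoid (Tup V k)) : Setoid (Tup V k) :=
  if r < k then
    { r := fun u v => γ.r u v ∧ ∀ φ : (Fin r → Fin k) → Tup V k,
        (WLSet γ u φ).ncard = (WLSet γ v φ).ncard
      iseqv := by
        refine ⟨fun u => ⟨γ.iseqv.refl u, fun _ => rfl⟩, ?_, ?_⟩
        · rintro u v ⟨h1, h2⟩; exact ⟨γ.iseqv.symm h1, fun φ => (h2 φ).symm⟩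
        · rintro u v w ⟨h1, h2⟩ ⟨h1', h2'⟩
          exact ⟨γ.iseqv.trans h1 h1', fun φ => (h2 φ).trans (h2' φ)⟩ }
  else γ

/-- The refinement operator `C_{k,r}`. -/
def Cop {k : ℕ} (r : ℕ) (γ : Setoid (Tup V k)) : Setoid (Tup V k) :=
  if r < k then
    { r := fun u v => γ.r u v ∧ ∀ i : Fin r → Fin k, Function.Injective i →
        ∀ w : Tup V k, (CSet γ u i w).ncard = (CSet γ v i w).ncard
      iseqv := by
        refine ⟨fun u => ⟨γ.iseqv.refl u, fun _ _ _ => rfl⟩, ?_, ?_⟩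
        · rintro u v ⟨h1, h2⟩; exact ⟨γ.iseqv.symm h1, fun i hi w => (h2 i hi w).symm⟩
        · rintro u v w ⟨h1, h2⟩ ⟨h1', h2'⟩
          exact ⟨γ.iseqv.trans h1 h1', fun i hi x => (h2 i hi x).trans (h2' i hi x)⟩ }
  else γ


theorem conjRefl {M : Type*} [Monoid M] (A : M) :
    ((1 : Mˣ) : M) * A * (((1 : Mˣ)⁻¹ : Mˣ) : M) = A := by simp

theorem conjSymm {M : Type*} [Monoid M] (S : Mˣ) {A B : M}
    (h : (S : M) * A * ((S⁻¹ : Mˣ) : M) = B) :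
    ((S⁻¹ : Mˣ) : M) * B * (((S⁻¹)⁻¹ : Mˣ) : M) = A := by
  subst h
  rw [inv_inv]
  simp [mul_assoc, Units.inv_mul_cancel_left, Units.inv_mul]

theorem conjTrans {M : Type*} [Monoid M] (S T : Mˣ) {A B C : M}
    (h1 : (S : M) * A * ((S⁻¹ : Mˣ) : M) = B)
    (h2 : (T : M) * B * ((T⁻¹ : Mˣ) : M) = C) :
    ((T * S : Mˣ) : M) * A * (((T * S)⁻¹ : Mˣ) : M) = C := by
  subst h1; subst h2
  simp [Units.val_mul, _root_.mul_inv_rev, mul_assoc]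

/-- The refinement operator `IM_k^F`. -/
def IMop (F : Type) [Field F] [Fintype V] [DecidableEq V] {k : ℕ}
    (γ : Setoid (Tup V k)) : Setoid (Tup V k) :=
  if 2 < k then
    { r := fun u v => γ.r u v ∧ ∀ i : Fin 2 → Fin k, Function.Injective i →
        ∃ S : (Matrix V V F)ˣ, ∀ w : Tup V k,
          (S : Matrix V V F) * chiMat F γ u i w * ((S⁻¹ : (Matrix V V F)ˣ) : Matrix V V F)
            = chiMat F γ v i w
      iseqv := by
        refine ⟨fun u => ⟨γ.iseqv.refl u, fun i _ => ⟨1, fun w => conjRefl _⟩⟩, ?_, ?_⟩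
        · rintro u v ⟨h1, h2⟩
          refine ⟨γ.iseqv.symm h1, fun i hi => ?_⟩
          obtain ⟨S, hS⟩ := h2 i hi
          exact ⟨S⁻¹, fun w => conjSymm S (hS w)⟩
        · rintro u v w ⟨h1, h2⟩ ⟨h1', h2'⟩
          refine ⟨γ.iseqv.trans h1 h1', fun i hi => ?_⟩
          obtain ⟨S, hS⟩ := h2 i hi
          obtain ⟨T, hT⟩ := h2' i hi
          exact ⟨T * S, fun x => conjTrans S T (hS x) (hT x)⟩ }
  else γ

/-- The refinement operator `IMt_k^F`. -/
def IMtop (F : Type) [Field F] [Fintype V] [DecidableEq V] {k : ℕ}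
    (γ : Setoid (Tup V k)) : Setoid (Tup V k) :=
  if 2 < k then
    { r := fun u v => γ.r u v ∧
        ∃ S : (Matrix V V F)ˣ, ∀ φ : (Fin 2 → Fin k) → Tup V k,
          (S : Matrix V V F) * chiMatT F γ u φ * ((S⁻¹ : (Matrix V V F)ˣ) : Matrix V V F)
            = chiMatT F γ v φ
      iseqv := by
        refine ⟨fun u => ⟨γ.iseqv.refl u, ⟨1, fun φ => conjRefl _⟩⟩, ?_, ?_⟩
        · rintro u v ⟨h1, ⟨S, hS⟩⟩
          exact ⟨γ.iseqv.symm h1, ⟨S⁻¹, fun φ => conjSymm S (hS φ)⟩⟩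
        · rintro u v w ⟨h1, ⟨S, hS⟩⟩ ⟨h1', ⟨T, hT⟩⟩
          exact ⟨γ.iseqv.trans h1 h1', ⟨T * S, fun φ => conjTrans S T (hS φ) (hT φ)⟩⟩ }
  else γ

/-- Iterate a refinement operator `|V|^k` times, reaching its stable fixed point. -/
def stabilize [Fintype V] {k : ℕ} (R : Setoid (Tup V k) → Setoid (Tup V k))
    (γ : Setoid (Tup V k)) : Setoid (Tup V k) :=
  R^[Fintype.card V ^ k] γ

/-- A graph on `V` : a labelled partition of `V²` that is a rainbow. -/
def IsGraph (Γ : Setoid (Tup V 2)) : Prop :=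
  (∀ u x y : V, Γ.r ![u, u] ![x, y] → x = y) ∧
  (∀ u v u' v' : V, Γ.r ![u, v] ![u', v'] ↔ Γ.r ![v, u] ![v', u'])

/-- The atomic-type partition `α_{k,Γ}` of `V^k` determined by a graph `Γ`. -/
def atomicPart {k : ℕ} (Γ : Setoid (Tup V 2)) : Setoid (Tup V k) where
  r u v := ∀ i j : Fin k, i ≠ j → Γ.r ![u i, u j] ![v i, v j]
  iseqv := ⟨fun _ _ _ _ => Γ.iseqv.refl _, fun h i j hij => Γ.iseqv.symm (h i j hij),
    fun h h' i j hij => Γ.iseqv.trans (h i j hij) (h' i j hij)⟩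

/-- `WL̄_{k,r}(Γ)`. -/
def WLbarR [Nonempty V] [Fintype V] (k r : ℕ) (Γ : Setoid (Tup V 2)) : Setoid (Tup V 2) :=
  if k ≤ 1 then Γ else prPart 2 (stabilize (WLop (k := k) r) (atomicPart Γ))

/-- `C̄_{k,r}(Γ)`. -/
def CbarR [Nonempty V] [Fintype V] (k r : ℕ) (Γ : Setoid (Tup V 2)) : Setoid (Tup V 2) :=
  if k ≤ 1 then Γ else prPart 2 (stabilize (Cop (k := k) r) (atomicPart Γ))

/-- `WL̄_k(Γ) = WL̄_{k,1}(Γ)`. -/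
def WLbar [Nonempty V] [Fintype V] (k : ℕ) (Γ : Setoid (Tup V 2)) : Setoid (Tup V 2) :=
  WLbarR k 1 Γ

/-- `C̄_k(Γ) = C̄_{k,1}(Γ)`. -/
def Cbar [Nonempty V] [Fintype V] (k : ℕ) (Γ : Setoid (Tup V 2)) : Setoid (Tup V 2) :=
  CbarR k 1 Γ

/-- `IM̄_k^F(Γ)`. -/
def IMbar (F : Type) [Field F] [Nonempty V] [Fintype V] [DecidableEq V]
    (k : ℕ) (Γ : Setoid (Tup V 2)) : Setoid (Tup V 2) :=
  if k ≤ 1 then Γ else prPart 2 (stabilize (IMop (k := k) F) (atomicPart Γ))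

/-- `IMt̄_k^F(Γ)`. -/
def IMtbar (F : Type) [Field F] [Nonempty V] [Fintype V] [DecidableEq V]
    (k : ℕ) (Γ : Setoid (Tup V 2)) : Setoid (Tup V 2) :=
  if k ≤ 1 then Γ else prPart 2 (stabilize (IMtop (k := k) F) (atomicPart Γ))

/-- A nonempty finite set together with a graph on it. -/
structure FinGraph where
  V : Type
  [instFintype : Fintype V]
  [instDecEq : DecidableEq V]
  [instNonempty : Nonempty V]
  Γ : Setoid (Tup V 2)
  isGraph : IsGraph Γ

attribute [instance] FinGraph.instFintype FinGraph.instDecEq FinGraph.instNonempty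

lemma substTup_apply_inj {k r : ℕ} (u : Tup V k) {i : Fin r → Fin k}
    (hi : Function.Injective i) (x : Tup V r) (s : Fin r) :
    substTup u i x (i s) = x s := by
  have h : ∃ t, i t = i s := ⟨s, rfl⟩
  simp only [substTup, dif_pos h]
  exact congrArg x (hi h.choose_spec)

lemma substTup_apply_not {k r : ℕ} (u : Tup V k) (i : Fin r → Fin k)
    (x : Tup V r) (j : Fin k) (h : ¬ ∃ s, i s = j) :
    substTup u i x j = u j := by simp only [substTup, dif_neg h]

lemma subst_cons {k r : ℕ} (u : Tup V k) {i : Fin (r+1) → Fin k}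
    (hi : Function.Injective i) (x' : Tup V r) (y : Tup V 1) :
    substTup (substTup u (i ∘ Fin.succ) x') (fun _ => i 0) y
      = substTup u i (Fin.cons (y 0) x') := by
  have hi' : Function.Injective (i ∘ Fin.succ) := hi.comp (Fin.succ_injective r)
  have hc1 : Function.Injective (fun _ : Fin 1 => i (0 : Fin (r+1))) :=
    fun a b _ => Subsingleton.elim a b
  funext j
  by_cases h0 : j = i 0
  · subst h0
    have := substTup_apply_inj (substTup u (i ∘ Fin.succ) x') hc1 y 0
    rw [this, substTup_apply_inj u hi (Fin.cons (y 0) x') 0, Fin.cons_zero]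
  · have hno : ¬ ∃ s : Fin 1, (fun _ : Fin 1 => i 0) s = j := by
      rintro ⟨s, rfl⟩; exact h0 rfl
    rw [substTup_apply_not _ _ _ _ hno]
    by_cases h1 : ∃ s : Fin r, i (Fin.succ s) = j
    · obtain ⟨s, rfl⟩ := h1
      rw [show i (Fin.succ s) = (i ∘ Fin.succ) s from rfl,
        substTup_apply_inj u hi' x' s,
        show (i ∘ Fin.succ) s = i (Fin.succ s) from rfl,
        substTup_apply_inj u hi (Fin.cons (y 0) x') (Fin.succ s), Fin.cons_succ]
    · have hno2 : ¬ ∃ s : Fin (r+1), i s = j := by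
        rintro ⟨s, rfl⟩
        rcases Fin.eq_zero_or_eq_succ s with rfl | ⟨t, rfl⟩
        · exact h0 rfl
        · exact h1 ⟨t, rfl⟩
      have hno1 : ¬ ∃ s : Fin r, (i ∘ Fin.succ) s = j := fun ⟨s, hs⟩ => h1 ⟨s, hs⟩
      rw [substTup_apply_not u (i ∘ Fin.succ) x' j hno1,
        substTup_apply_not u i (Fin.cons (y 0) x') j hno2]

/-- The equivalence `V^r × V^1 ≃ V^{r+1}` given by `Fin.cons`. -/
def consEquiv (r : ℕ) : Tup V r × Tup V 1 ≃ Tup V (r+1) where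
  toFun p := Fin.cons (p.2 0) p.1
  invFun x := (x ∘ Fin.succ, fun _ => x 0)
  left_inv p := by
    refine Prod.ext (funext fun s => ?_) (funext fun t => ?_)
    · simp
    · rw [Subsingleton.elim t 0]; simp
  right_inv x := Fin.cons_self_tail x

lemma csets_decompose {k r : ℕ} [Fintype V] (γ : Setoid (Tup V k)) (a : Tup V k)
    {i : Fin (r+1) → Fin k} (hi : Function.Injective i) (w : Tup V k) :
    (CSet γ a i w).ncard
      = ∑ x' : Tup V r, (CSet γ (substTup a (i ∘ Fin.succ) x') (fun _ : Fin 1 => i 0) w).ncard := by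
  classical
  have e1 : (CSet γ a i w) ≃ {p : Tup V r × Tup V 1 //
      γ.r (substTup a i (consEquiv r p)) w} :=
    ((consEquiv (V := V) r).symm.subtypeEquiv (fun x => by
      simp only [CSet, Set.mem_setOf_eq, Equiv.apply_symm_apply]))
  have e2 : {p : Tup V r × Tup V 1 // γ.r (substTup a i (consEquiv r p)) w}
      ≃ Σ x' : Tup V r, {y : Tup V 1 // γ.r (substTup a i (consEquiv r (x', y))) w} :=
    Equiv.subtypeProdEquivSigmaSubtype
      (fun (x' : Tup V r) (y : Tup V 1) => γ.r (substTup a i (consEquiv r (x', y))) w)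
  have : (CSet γ a i w).ncard
      = Nat.card (Σ x' : Tup V r, {y : Tup V 1 //
          γ.r (substTup a i (consEquiv r (x', y))) w}) := by
    rw [← Nat.card_coe_set_eq, Nat.card_congr (e1.trans e2)]
  rw [this, Nat.card_eq_fintype_card, Fintype.card_sigma]
  refine Finset.sum_congr rfl fun x' _ => ?_
  have hset : CSet γ (substTup a (i ∘ Fin.succ) x') (fun _ : Fin 1 => i 0) w
      = {y : Tup V 1 | γ.r (substTup a i (consEquiv r (x', y))) w} := by
    ext y
    simp only [CSet, Set.mem_setOf_eq]
    rw [show (consEquiv r (x', y) : Tup V (r+1)) = Fin.cons (y 0) x' from rfl,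
      ← subst_cons a hi x' y]
  rw [hset, ← Nat.card_coe_set_eq, Nat.card_eq_fintype_card]
  rfl

lemma sum_invariant {k r : ℕ} [Fintype V] (γ : Setoid (Tup V k))
    (f : Tup V k → ℕ) (hf : ∀ a b, γ.r a b → f a = f b)
    (gu gv : Tup V r → Tup V k)
    (hcount : ∀ w : Tup V k,
      {x : Tup V r | γ.r (gu x) w}.ncard = {x : Tup V r | γ.r (gv x) w}.ncard) :
    ∑ x : Tup V r, f (gu x) = ∑ x : Tup V r, f (gv x) := by
  classical
  let fbar : Quotient γ → ℕ := Quotient.lift f hf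
  have key : ∀ g : Tup V r → Tup V k, ∑ x : Tup V r, f (g x)
      = ∑ σ : Quotient γ, ({x : Tup V r | γ.r (g x) σ.out}.ncard) * fbar σ := by
    intro g
    have h1 : ∀ x : Tup V r, f (g x)
        = ∑ σ : Quotient γ, if Quotient.mk γ (g x) = σ then fbar σ else 0 := by
      intro x
      rw [Finset.sum_ite_eq (Finset.univ) (Quotient.mk γ (g x)) fbar]
      simp [fbar]
    simp_rw [h1]
    rw [Finset.sum_comm]
    refine Finset.sum_congr rfl fun σ _ => ?_
    have h2 : ∀ x : Tup V r, (Quotient.mk γ (g x) = σ) ↔ γ.r (g x) σ.out := by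
      intro x
      conv_lhs => rw [← Quotient.out_eq σ]
      exact Quotient.eq
    calc ∑ x : Tup V r, (if Quotient.mk γ (g x) = σ then fbar σ else 0)
        = ∑ x : Tup V r, (if γ.r (g x) σ.out then fbar σ else 0) := by
          refine Finset.sum_congr rfl fun x _ => by rw [if_congr (h2 x) rfl rfl]
      _ = ∑ x ∈ Finset.univ.filter (fun x : Tup V r => γ.r (g x) σ.out), fbar σ := by
          rw [Finset.sum_filter]
      _ = (Finset.univ.filter (fun x : Tup V r => γ.r (g x) σ.out)).card * fbar σ := by
          rw [Finset.sum_const, smul_eq_mul]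
      _ = ({x : Tup V r | γ.r (g x) σ.out}.ncard) * fbar σ := by
          congr 1
          rw [← Nat.card_coe_set_eq, Nat.card_eq_fintype_card, Fintype.card_subtype]
          simp only [Set.mem_setOf_eq]
  rw [key gu, key gv]
  exact Finset.sum_congr rfl fun σ _ => by rw [hcount σ.out]

/-- Every `C_k`-stable partition is `C_{k,r}`-stable. -/
theorem c1_stable_cr_stable (V : Type) [Fintype V] [Nonempty V] (k r : ℕ)
    (γ : Setoid (Tup V k)) (h : CStable 1 γ) : CStable r γ := by
  induction r with
  | zero =>
    intro _ u v huv i _ w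
    have hsub : ∀ (a : Tup V k) (x : Tup V 0), substTup a i x = a := by
      intro a x; funext j
      exact substTup_apply_not a i x j (by rintro ⟨s, -⟩; exact s.elim0)
    have hset : CSet γ u i w = CSet γ v i w := by
      ext x
      simp only [CSet, Set.mem_setOf_eq, hsub]
      exact ⟨fun hx => γ.iseqv.trans (γ.iseqv.symm huv) hx,
        fun hx => γ.iseqv.trans huv hx⟩
    rw [hset]
  | succ r ih =>
    intro hk u v huv i hinj w
    have h1k : 1 < k := lt_of_le_of_lt (Nat.le_add_left 1 r) hk
    have hrk : r < k := lt_trans (Nat.lt_succ_self r) hk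
    have hi' : Function.Injective (i ∘ Fin.succ) := hinj.comp (Fin.succ_injective r)
    have hc1 : Function.Injective (fun _ : Fin 1 => i 0) :=
      fun a b _ => Subsingleton.elim a b
    rw [csets_decompose γ u hinj w, csets_decompose γ v hinj w]
    exact sum_invariant γ
      (fun a => (CSet γ a (fun _ => i 0) w).ncard)
      (fun a b hab => h h1k a b hab (fun _ => i 0) hc1 w)
      (fun x' => substTup u (i ∘ Fin.succ) x')
      (fun x' => substTup v (i ∘ Fin.succ) x')
      (fun w' => ih hrk u v huv (i ∘ Fin.succ) hi' w')

end
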